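/- For every α > 0, there exists a class of probability distributions over ℕ×ℕ that is realizably learnable but, for every η with 0 < η ≤ 1/(16α), is not η-subtractive α-robustly learnable. -/

import Mathlib

open scoped BigOperators ENNReal

namespace RobustDistLearn

variable {X : Type*}

/-- `p` is a probability mass function on `X`. -/
def IsPMF (p : X → ℝ) : Prop := (∀ x, 0 ≤ p x) ∧ ∑' x, p x = 1

/-- Total variation distance between two mass functions:
`d_TV(p,q) = (1/2)·∑ₓ |p x − q x|`. -/
noncomputable def dTV (p q : X → ℝ) : ℝ := (1 / 2) * ∑' x, |p x - q x|

/-- The probability, over a sample `S` of `n` i.i.d. draws from `p`, of the event `E`. -/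
noncomputable def iidProb (p : X → ℝ) (n : ℕ) (E : Set (Fin n → X)) : ℝ :=
  ∑' S : Fin n → X, E.indicator (fun T => ∏ i, p (T i)) S

/-- The mixture `η·q + (1−η)·p`. -/
def mix (η : ℝ) (q p : X → ℝ) : X → ℝ := fun x => η * q x + (1 - η) * p x

/-- `inf_{p' ∈ C} d_TV(p, p')`. -/
noncomputable def distToClass (p : X → ℝ) (C : Set (X → ℝ)) : ℝ := sInf (dTV p '' C)

/-- A learner maps, for each sample size `n`, a tuple `S ∈ Xⁿ` to a distribution over `X`. -/
def IsLearner (A : (n : ℕ) → (Fin n → X) → (X → ℝ)) : Prop := ∀ n S, IsPMF (A n S)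

/-- Realizable learnability of a class `C` of distributions. -/
def RealizablyLearnable (C : Set (X → ℝ)) : Prop :=
  ∃ A : (n : ℕ) → (Fin n → X) → (X → ℝ), IsLearner A ∧
    ∃ nC : ℝ → ℝ → ℕ,
      ∀ p ∈ C, ∀ ε ∈ Set.Ioo (0:ℝ) 1, ∀ δ ∈ Set.Ioo (0:ℝ) 1, ∀ n : ℕ, nC ε δ ≤ n →
        1 - δ ≤ iidProb p n {S | dTV (A n S) p ≤ ε}

/-- `α`-robust (agnostic) learnability. -/
def RobustlyLearnable (C : Set (X → ℝ)) (α : ℝ) : Prop :=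
  ∃ A : (n : ℕ) → (Fin n → X) → (X → ℝ), IsLearner A ∧
    ∃ nC : ℝ → ℝ → ℕ,
      ∀ p : X → ℝ, IsPMF p → ∀ ε ∈ Set.Ioo (0:ℝ) 1, ∀ δ ∈ Set.Ioo (0:ℝ) 1, ∀ n : ℕ, nC ε δ ≤ n →
        1 - δ ≤ iidProb p n {S | dTV (A n S) p ≤ α * distToClass p C + ε}

/-- Additive `α`-robust learnability. -/
def AdditiveRobustlyLearnable (C : Set (X → ℝ)) (α : ℝ) : Prop :=
  ∃ A : (n : ℕ) → (Fin n → X) → (X → ℝ), IsLearner A ∧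
    ∃ nC : ℝ → ℝ → ℕ,
      ∀ η ∈ Set.Ioo (0:ℝ) 1, ∀ q : X → ℝ, IsPMF q → ∀ p ∈ C,
        ∀ ε ∈ Set.Ioo (0:ℝ) 1, ∀ δ ∈ Set.Ioo (0:ℝ) 1, ∀ n : ℕ, nC ε δ ≤ n →
          1 - δ ≤ iidProb (mix η q p) n {S | dTV (A n S) (mix η q p) ≤ α * η + ε}

/-- Huber additive `α`-robust learnability: the guarantee is with respect to the clean `p`. -/
def HuberAdditiveRobustlyLearnable (C : Set (X → ℝ)) (α : ℝ) : Prop :=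
  ∃ A : (n : ℕ) → (Fin n → X) → (X → ℝ), IsLearner A ∧
    ∃ nC : ℝ → ℝ → ℕ,
      ∀ η ∈ Set.Ioo (0:ℝ) 1, ∀ q : X → ℝ, IsPMF q → ∀ p ∈ C,
        ∀ ε ∈ Set.Ioo (0:ℝ) 1, ∀ δ ∈ Set.Ioo (0:ℝ) 1, ∀ n : ℕ, nC ε δ ≤ n →
          1 - δ ≤ iidProb (mix η q p) n {S | dTV (A n S) p ≤ α * η + ε}

/-- Subtractive `α`-robust learnability. -/
def SubtractiveRobustlyLearnable (C : Set (X → ℝ)) (α : ℝ) : Prop :=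
  ∃ A : (n : ℕ) → (Fin n → X) → (X → ℝ), IsLearner A ∧
    ∃ nC : ℝ → ℝ → ℕ,
      ∀ η ∈ Set.Ioo (0:ℝ) 1, ∀ p : X → ℝ, IsPMF p →
        (∃ q : X → ℝ, IsPMF q ∧ mix η q p ∈ C) →
        ∀ ε ∈ Set.Ioo (0:ℝ) 1, ∀ δ ∈ Set.Ioo (0:ℝ) 1, ∀ n : ℕ, nC ε δ ≤ n →
          1 - δ ≤ iidProb p n {S | dTV (A n S) p ≤ α * η + ε}

/-- `η`-`α`-robust learnability (known corruption level `η`). -/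
def EtaRobustlyLearnable (C : Set (X → ℝ)) (η α : ℝ) : Prop :=
  ∃ A : (n : ℕ) → (Fin n → X) → (X → ℝ), IsLearner A ∧
    ∃ nC : ℝ → ℝ → ℕ,
      ∀ p : X → ℝ, IsPMF p → distToClass p C ≤ η →
        ∀ ε ∈ Set.Ioo (0:ℝ) 1, ∀ δ ∈ Set.Ioo (0:ℝ) 1, ∀ n : ℕ, nC ε δ ≤ n →
          1 - δ ≤ iidProb p n {S | dTV (A n S) p ≤ α * η + ε}

/-- `η`-additive `α`-robust learnability (known corruption level `η`). -/
def EtaAdditiveRobustlyLearnable (C : Set (X → ℝ)) (η α : ℝ) : Prop :=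
  ∃ A : (n : ℕ) → (Fin n → X) → (X → ℝ), IsLearner A ∧
    ∃ nC : ℝ → ℝ → ℕ,
      ∀ q : X → ℝ, IsPMF q → ∀ p ∈ C,
        ∀ ε ∈ Set.Ioo (0:ℝ) 1, ∀ δ ∈ Set.Ioo (0:ℝ) 1, ∀ n : ℕ, nC ε δ ≤ n →
          1 - δ ≤ iidProb (mix η q p) n {S | dTV (A n S) (mix η q p) ≤ α * η + ε}

/-- `η`-subtractive `α`-robust learnability (known corruption level `η`). -/
def EtaSubtractiveRobustlyLearnable (C : Set (X → ℝ)) (η α : ℝ) : Prop :=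
  ∃ A : (n : ℕ) → (Fin n → X) → (X → ℝ), IsLearner A ∧
    ∃ nC : ℝ → ℝ → ℕ,
      ∀ p : X → ℝ, IsPMF p →
        (∃ q : X → ℝ, IsPMF q ∧ mix η q p ∈ C) →
        ∀ ε ∈ Set.Ioo (0:ℝ) 1, ∀ δ ∈ Set.Ioo (0:ℝ) 1, ∀ n : ℕ, nC ε δ ≤ n →
          1 - δ ≤ iidProb p n {S | dTV (A n S) p ≤ α * η + ε}

/-- The probability of an event under a `PMF`. -/
noncomputable def pmfProb {Y : Type*} (m : PMF Y) (E : Set Y) : ℝ :=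
  (m.toOuterMeasure E).toReal

/-- `(ε,δ)`-differential privacy of a randomized algorithm on inputs of size `n`. -/
def IsDP {Y : Type*} {n : ℕ} (M : (Fin n → X) → PMF Y) (ε δ : ℝ) : Prop :=
  ∀ x x' : Fin n → X, (∃ i : Fin n, ∀ j : Fin n, j ≠ i → x j = x' j) →
    ∀ B : Set Y,
      (M x).toOuterMeasure B ≤
        ENNReal.ofReal (Real.exp ε) * (M x').toOuterMeasure B + ENNReal.ofReal δ

/-- Probability, jointly over `S ~ pⁿ` and the internal randomness of `M`, of the event `E`
on the output of `M`. -/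
noncomputable def randIidProb {Y : Type*} (p : X → ℝ) (n : ℕ)
    (M : (Fin n → X) → PMF Y) (E : Set Y) : ℝ :=
  ∑' S : Fin n → X, (∏ i, p (S i)) * pmfProb (M S) E

/-- Approximate DP learnability. -/
def ApproxDPLearnable (C : Set (X → ℝ)) : Prop :=
  ∃ Alg : (n : ℕ) → (Fin n → X) → PMF (X → ℝ),
    (∀ n S f, f ∈ (Alg n S).support → IsPMF f) ∧
    ∃ nC : ℝ → ℝ → ℝ → ℝ → ℕ,
      ∀ p ∈ C, ∀ α ∈ Set.Ioo (0:ℝ) 1, ∀ β ∈ Set.Ioo (0:ℝ) 1,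
        ∀ ε ∈ Set.Ioo (0:ℝ) 1, ∀ δ ∈ Set.Ioo (0:ℝ) 1, ∀ n : ℕ, nC α β ε δ ≤ n →
          IsDP (Alg n) ε δ ∧
          1 - β ≤ randIidProb p n (Alg n) {f | dTV p f ≤ α}

/-- Pure DP learnability. -/
def PureDPLearnable (C : Set (X → ℝ)) : Prop :=
  ∃ Alg : (n : ℕ) → (Fin n → X) → PMF (X → ℝ),
    (∀ n S f, f ∈ (Alg n S).support → IsPMF f) ∧
    ∃ nC : ℝ → ℝ → ℝ → ℕ,
      ∀ p ∈ C, ∀ α ∈ Set.Ioo (0:ℝ) 1, ∀ β ∈ Set.Ioo (0:ℝ) 1, ∀ ε ∈ Set.Ioo (0:ℝ) 1,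
        ∀ n : ℕ, nC α β ε ≤ n →
          IsDP (Alg n) ε 0 ∧
          1 - β ≤ randIidProb p n (Alg n) {f | dTV p f ≤ α}

/-- `α`-robust learnability by a possibly randomized learner. -/
def RandRobustlyLearnable (C : Set (X → ℝ)) (α : ℝ) : Prop :=
  ∃ Alg : (n : ℕ) → (Fin n → X) → PMF (X → ℝ),
    (∀ n S f, f ∈ (Alg n S).support → IsPMF f) ∧
    ∃ nC : ℝ → ℝ → ℕ,
      ∀ p : X → ℝ, IsPMF p → ∀ ε ∈ Set.Ioo (0:ℝ) 1, ∀ δ ∈ Set.Ioo (0:ℝ) 1,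
        ∀ n : ℕ, nC ε δ ≤ n →
          1 - δ ≤ randIidProb p n (Alg n) {f | dTV f p ≤ α * distToClass p C + ε}

/-- A class `C` admits `(τ, t, nf)` `r`-robust sample compression. -/
def AdmitsCompression (C : Set (X → ℝ)) (τ t nf : ℝ → ℕ) (r : ℝ) : Prop :=
  ∃ J : List X → List Bool → (X → ℝ),
    (∀ L B, J L B ∈ C) ∧
    ∀ q ∈ C, ∀ p : X → ℝ, IsPMF p → dTV p q ≤ r →
      ∀ ε ∈ Set.Ioo (0:ℝ) 1,
        (2 : ℝ) / 3 ≤ iidProb p (nf ε)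
          {S | ∃ L : List X, ∃ B : List Bool,
            L.length ≤ τ ε ∧ (∀ x ∈ L, ∃ i, S i = x) ∧ B.length ≤ t ε ∧
            dTV (J L B) q ≤ r + ε}

/-- The distribution `q_{i,j,k} = (1−1/j)·δ_{(0,0)} + (1/j − 1/k)·U_{A_i×{2j+1}} + (1/k)·δ_{(i,2j+2)}`
over `ℕ × ℕ`, for a given enumeration `A` of the finite nonempty subsets of `ℕ`. -/
noncomputable def qDist (A : ℕ → Finset ℕ) (i j k : ℕ) : ℕ × ℕ → ℝ := fun x =>
  (if x = (0, 0) then 1 - 1 / (j : ℝ) else 0) +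
  (if x.1 ∈ A i ∧ x.2 = 2 * j + 1 then (1 / (j : ℝ) - 1 / (k : ℝ)) / ((A i).card : ℝ) else 0) +
  (if x = (i, 2 * j + 2) then 1 / (k : ℝ) else 0)

/-- The class `Q_g = {q_{i,j,g(j)} : i, j ∈ ℕ, j ≥ 1}`. -/
def Qg (A : ℕ → Finset ℕ) (g : ℕ → ℕ) : Set (ℕ × ℕ → ℝ) :=
  {p | ∃ i j : ℕ, 1 ≤ j ∧ p = qDist A i j (g j)}

/-- The distribution `(1−γ)·δ_{(0,0)} + γ·U_{B×{2j+1}}` over `ℕ × ℕ`. -/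
noncomputable def pDist (γ : ℝ) (B : Finset ℕ) (j : ℕ) : ℕ × ℕ → ℝ := fun x =>
  (if x = (0, 0) then 1 - γ else 0) +
  (if x.1 ∈ B ∧ x.2 = 2 * j + 1 then γ / (B.card : ℝ) else 0)

/-- `g : ℕ → ℕ` is superlinear: `g(t)/t → ∞`. -/
def Superlinear (g : ℕ → ℕ) : Prop :=
  Filter.Tendsto (fun t : ℕ => (g t : ℝ) / (t : ℝ)) Filter.atTop Filter.atTop


section Found

variable [DecidableEq X]
set_option linter.unusedSectionVars false

lemma prod_vanish (p : X → ℝ) (s : Finset X) (hs : ∀ x ∉ s, p x = 0)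
    {n : ℕ} {S : Fin n → X} (hS : S ∉ Fintype.piFinset (fun _ : Fin n => s)) :
    ∏ i, p (S i) = 0 := by
  have : ∃ i, S i ∉ s := by
    by_contra h; push_neg at h
    exact hS (by simpa [Fintype.mem_piFinset] using h)
  obtain ⟨i, hi⟩ := this
  exact Finset.prod_eq_zero (Finset.mem_univ i) (hs _ hi)

lemma iidProb_eq_sum (p : X → ℝ) (s : Finset X) (hs : ∀ x ∉ s, p x = 0)
    (n : ℕ) (E : Set (Fin n → X)) :
    iidProb p n E =
      ∑ S ∈ Fintype.piFinset (fun _ : Fin n => s),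
        E.indicator (fun T => ∏ i, p (T i)) S := by
  classical
  apply tsum_eq_sum
  intro S hS
  have hprod := prod_vanish p s hs hS
  by_cases hE : S ∈ E
  · simpa [Set.indicator_of_mem hE] using hprod
  · simp [Set.indicator_of_notMem hE]

lemma sum_prod_pi (s : Finset X) (n : ℕ) (f : X → ℝ) :
    ∑ S ∈ Fintype.piFinset (fun _ : Fin n => s), ∏ i, f (S i)
      = (∑ x ∈ s, f x) ^ n := by
  rw [← Finset.prod_univ_sum]; simp

lemma sum_eq_one (p : X → ℝ) (s : Finset X) (hs : ∀ x ∉ s, p x = 0)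
    (hp : IsPMF p) : ∑ x ∈ s, p x = 1 := by
  rw [← (tsum_eq_sum hs : ∑' x, p x = _)]; exact hp.2

lemma iidProb_eq_one (p : X → ℝ) (s : Finset X) (hs : ∀ x ∉ s, p x = 0)
    (hp : IsPMF p) (n : ℕ) (E : Set (Fin n → X))
    (hE : ∀ S : Fin n → X, (∀ i, p (S i) ≠ 0) → S ∈ E) :
    iidProb p n E = 1 := by
  classical
  have h1 : ∀ S : Fin n → X, E.indicator (fun T => ∏ i, p (T i)) S = ∏ i, p (S i) := by
    intro S
    by_cases hS : S ∈ E
    · simp [Set.indicator_of_mem hS]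
    · have : ∃ i, p (S i) = 0 := by
        by_contra h; push_neg at h; exact hS (hE S h)
      obtain ⟨i, hi⟩ := this
      rw [Set.indicator_of_notMem hS,
        Finset.prod_eq_zero (Finset.mem_univ i) hi]
  unfold iidProb
  calc ∑' S : Fin n → X, E.indicator (fun T => ∏ i, p (T i)) S
      = ∑' S : Fin n → X, ∏ i, p (S i) := tsum_congr h1
    _ = ∑ S ∈ Fintype.piFinset (fun _ : Fin n => s), ∏ i, p (S i) :=
        tsum_eq_sum (fun S hS => prod_vanish p s hs hS)
    _ = (∑ x ∈ s, p x) ^ n := sum_prod_pi s n p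
    _ = 1 := by rw [sum_eq_one p s hs hp]; simp

lemma iidProb_exists_ge (p : X → ℝ) (s : Finset X) (hs : ∀ x ∉ s, p x = 0)
    (hp : IsPMF p) (n : ℕ) (x0 : X) (E : Set (Fin n → X))
    (hE : ∀ S : Fin n → X, (∀ i, p (S i) ≠ 0) → (∃ i, S i = x0) → S ∈ E) :
    1 - (1 - p x0) ^ n ≤ iidProb p n E := by
  classical
  set g : X → ℝ := fun x => p x * (if x = x0 then 0 else 1) with hg
  have key : ∀ S : Fin n → X,
      (∏ i, p (S i)) - (∏ i, g (S i))
        ≤ E.indicator (fun T => ∏ i, p (T i)) S := by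
    intro S
    have hind : 0 ≤ E.indicator (fun T => ∏ i, p (T i)) S :=
      Set.indicator_nonneg (fun a _ => Finset.prod_nonneg fun i _ => hp.1 _) S
    by_cases hz : ∀ i, p (S i) ≠ 0
    · by_cases hx : ∃ i, S i = x0
      · have hx' := hx
        obtain ⟨i, hi⟩ := hx'
        have h2 : ∏ i, g (S i) = 0 :=
          Finset.prod_eq_zero (Finset.mem_univ i) (by simp [hg, hi])
        rw [Set.indicator_of_mem (hE S hz hx), h2, sub_zero]
      · have h2 : ∏ i, g (S i) = ∏ i, p (S i) := by
          apply Finset.prod_congr rfl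
          intro i _
          have : S i ≠ x0 := fun h => hx ⟨i, h⟩
          simp [hg, this]
        rw [h2, sub_self]; exact hind
    · push_neg at hz
      obtain ⟨i, hi⟩ := hz
      have h1 : ∏ i, p (S i) = 0 := Finset.prod_eq_zero (Finset.mem_univ i) hi
      have h2 : ∏ i, g (S i) = 0 :=
        Finset.prod_eq_zero (Finset.mem_univ i) (by simp [hg, hi])
      simpa [h1, h2] using hind
  have hsumg : ∑ x ∈ s, g x = 1 - p x0 := by
    have h1 : ∑ x ∈ s, g x = (∑ x ∈ s, p x) - ∑ x ∈ s, (if x = x0 then p x else 0) := by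
      rw [← Finset.sum_sub_distrib]
      apply Finset.sum_congr rfl
      intro x _
      by_cases hx : x = x0 <;> simp [hg, hx]
    rw [h1, sum_eq_one p s hs hp, Finset.sum_ite_eq' s x0 (fun x => p x)]
    by_cases hx0 : x0 ∈ s
    · simp [hx0]
    · simp [hx0, hs _ hx0]
  have hEsum : iidProb p n E =
      ∑ S ∈ Fintype.piFinset (fun _ : Fin n => s),
        E.indicator (fun T => ∏ i, p (T i)) S := iidProb_eq_sum p s hs n E
  have hle : ∑ S ∈ Fintype.piFinset (fun _ : Fin n => s),
      ((∏ i, p (S i)) - (∏ i, g (S i)))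
      ≤ ∑ S ∈ Fintype.piFinset (fun _ : Fin n => s),
        E.indicator (fun T => ∏ i, p (T i)) S :=
    Finset.sum_le_sum fun S _ => key S
  rw [hEsum]
  refine le_trans (le_of_eq ?_) hle
  rw [Finset.sum_sub_distrib, sum_prod_pi, sum_prod_pi, sum_eq_one p s hs hp, one_pow,
    hsumg]

lemma iidProb_nonneg (p : X → ℝ) (hp : ∀ x, 0 ≤ p x) (n : ℕ) (E : Set (Fin n → X)) :
    0 ≤ iidProb p n E := by
  apply tsum_nonneg
  intro S
  exact Set.indicator_nonneg (fun a _ => Finset.prod_nonneg fun i _ => hp _) S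

end Found


noncomputable def cBj (Nf : ℕ) (B : Finset ℕ) (j : ℕ) : ℕ × ℕ → ℝ := fun x =>
  (if x = (0, 0) then 1 - 1 / (j : ℝ) else 0) +
  (if x.1 ∈ B ∧ x.2 = 3 then (1 / (j : ℝ) - 1 / ((Nf : ℝ) * j)) / (B.card : ℝ) else 0) +
  (if x = (Encodable.encode (B, j), 4) then 1 / ((Nf : ℝ) * j) else 0)

noncomputable def pB (γ : ℝ) (B : Finset ℕ) : ℕ × ℕ → ℝ := fun x =>
  (if x = (0, 0) then 1 - γ else 0) +
  (if x.1 ∈ B ∧ x.2 = 3 then γ / (B.card : ℝ) else 0)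

def d0 : ℕ × ℕ → ℝ := fun x => if x = (0, 0) then 1 else 0

def CC (Nf : ℕ) : Set (ℕ × ℕ → ℝ) :=
  {p | ∃ B : Finset ℕ, ∃ j : ℕ, B.Nonempty ∧ 2 ≤ j ∧ p = cBj Nf B j}

def suppP (B : Finset ℕ) : Finset (ℕ × ℕ) :=
  insert (0, 0) (B.image (fun b => (b, 3)))

def suppC (Nf : ℕ) (B : Finset ℕ) (j : ℕ) : Finset (ℕ × ℕ) :=
  insert (Encodable.encode (B, j), 4) (suppP B)

lemma sum_suppP (B : Finset ℕ) (f : ℕ × ℕ → ℝ) :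
    ∑ x ∈ suppP B, f x = f (0, 0) + ∑ b ∈ B, f (b, 3) := by
  unfold suppP
  rw [Finset.sum_insert (by simp), Finset.sum_image (by intro a _ b _ h; exact (Prod.ext_iff.mp h).1)]

lemma sum_suppC (Nf : ℕ) (B : Finset ℕ) (j : ℕ) (f : ℕ × ℕ → ℝ) :
    ∑ x ∈ suppC Nf B j, f x
      = f (Encodable.encode (B, j), 4) + f (0, 0) + ∑ b ∈ B, f (b, 3) := by
  unfold suppC
  rw [Finset.sum_insert (by simp [suppP]), sum_suppP, add_assoc]

lemma pB_vanish (γ : ℝ) (B : Finset ℕ) : ∀ x ∉ suppP B, pB γ B x = 0 := by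
  intro x hx
  simp only [suppP, Finset.mem_insert, Finset.mem_image] at hx
  push_neg at hx
  obtain ⟨h0, h1⟩ := hx
  have h2 : ¬(x.1 ∈ B ∧ x.2 = 3) := by
    rintro ⟨hb, h3⟩
    exact h1 x.1 hb (by rw [← h3])
  show (if x = (0,0) then 1 - γ else 0) + (if x.1 ∈ B ∧ x.2 = 3 then γ / (B.card : ℝ) else 0) = 0
  rw [if_neg h0, if_neg h2, add_zero]

lemma cBj_vanish (Nf : ℕ) (B : Finset ℕ) (j : ℕ) :
    ∀ x ∉ suppC Nf B j, cBj Nf B j x = 0 := by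
  intro x hx
  simp only [suppC, suppP, Finset.mem_insert, Finset.mem_image] at hx
  push_neg at hx
  obtain ⟨h4, h0, h1⟩ := hx
  have h2 : ¬(x.1 ∈ B ∧ x.2 = 3) := by
    rintro ⟨hb, h3⟩
    exact h1 x.1 hb (by rw [← h3])
  show (if x = (0,0) then 1 - 1/(j:ℝ) else 0) + (if x.1 ∈ B ∧ x.2 = 3 then (1 / (j : ℝ) - 1 / ((Nf : ℝ) * j)) / (B.card : ℝ) else 0) + (if x = (Encodable.encode (B, j), 4) then 1 / ((Nf : ℝ) * j) else 0) = 0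
  rw [if_neg h0, if_neg h2, if_neg h4, add_zero, add_zero]

lemma cBj_apply_00 (Nf : ℕ) (B : Finset ℕ) (j : ℕ) :
    cBj Nf B j (0, 0) = 1 - 1 / (j : ℝ) := by
  have : ¬((0 : ℕ) = 3) := by decide
  simp [cBj, Prod.ext_iff]

lemma cBj_apply_id (Nf : ℕ) (B : Finset ℕ) (j : ℕ) :
    cBj Nf B j (Encodable.encode (B, j), 4) = 1 / ((Nf : ℝ) * j) := by
  simp [cBj, Prod.ext_iff]

lemma cBj_apply_b3 (Nf : ℕ) (B : Finset ℕ) (j : ℕ) (b : ℕ) (hb : b ∈ B) :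
    cBj Nf B j (b, 3) = (1 / (j : ℝ) - 1 / ((Nf : ℝ) * j)) / (B.card : ℝ) := by
  simp [cBj, Prod.ext_iff, hb]

lemma pB_apply_00 (γ : ℝ) (B : Finset ℕ) : pB γ B (0, 0) = 1 - γ := by
  simp [pB, Prod.ext_iff]

lemma pB_apply_b3 (γ : ℝ) (B : Finset ℕ) (b : ℕ) (hb : b ∈ B) :
    pB γ B (b, 3) = γ / (B.card : ℝ) := by
  simp [pB, Prod.ext_iff, hb]

lemma one_div_Nfj_le (Nf j : ℕ) (hNf : 64 ≤ Nf) (hj : 1 ≤ j) :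
    1 / ((Nf : ℝ) * j) ≤ 1 / (j : ℝ) := by
  have hj' : (1 : ℝ) ≤ (j : ℝ) := by exact_mod_cast hj
  have hNf' : (1 : ℝ) ≤ (Nf : ℝ) := by
    have : (64 : ℝ) ≤ (Nf : ℝ) := by exact_mod_cast hNf
    linarith
  apply one_div_le_one_div_of_le (by linarith)
  nlinarith

lemma cBj_nonneg (Nf : ℕ) (B : Finset ℕ) (j : ℕ) (hNf : 64 ≤ Nf) (hj : 2 ≤ j) :
    ∀ x, 0 ≤ cBj Nf B j x := by
  intro x
  have hj' : (2 : ℝ) ≤ (j : ℝ) := by exact_mod_cast hj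
  have h1 : (0:ℝ) ≤ 1 - 1 / (j : ℝ) := by
    have : 1 / (j : ℝ) ≤ 1 / 2 := by
      apply one_div_le_one_div_of_le <;> linarith
    linarith
  have h2 : (0:ℝ) ≤ 1 / (j : ℝ) - 1 / ((Nf : ℝ) * j) := by
    have := one_div_Nfj_le Nf j hNf (by omega)
    linarith
  have h3 : (0:ℝ) ≤ 1 / ((Nf : ℝ) * j) := by positivity
  unfold cBj
  apply add_nonneg (add_nonneg _ _) <;> first
    | (split <;> [skip; exact le_refl 0]) <;>
        first
          | exact h1
          | exact div_nonneg h2 (by positivity)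
          | exact h3

lemma cBj_tsum (Nf : ℕ) (B : Finset ℕ) (j : ℕ) (hB : B.Nonempty) :
    ∑' x, cBj Nf B j x = 1 := by
  rw [tsum_eq_sum (cBj_vanish Nf B j), sum_suppC]
  rw [cBj_apply_id, cBj_apply_00]
  rw [Finset.sum_congr rfl (fun b hb => cBj_apply_b3 Nf B j b hb)]
  rw [Finset.sum_const, nsmul_eq_mul]
  have hcard : (B.card : ℝ) ≠ 0 := by
    have := Finset.card_pos.mpr hB
    positivity
  field_simp
  ring

lemma cBj_isPMF (Nf : ℕ) (B : Finset ℕ) (j : ℕ) (hNf : 64 ≤ Nf) (hj : 2 ≤ j)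
    (hB : B.Nonempty) : IsPMF (cBj Nf B j) :=
  ⟨cBj_nonneg Nf B j hNf hj, cBj_tsum Nf B j hB⟩

lemma pB_nonneg (γ : ℝ) (B : Finset ℕ) (h0 : 0 ≤ γ) (h1 : γ ≤ 1) :
    ∀ x, 0 ≤ pB γ B x := by
  intro x
  unfold pB
  apply add_nonneg <;> (split <;> [skip; exact le_refl 0])
  · linarith
  · exact div_nonneg h0 (by positivity)

lemma pB_tsum (γ : ℝ) (B : Finset ℕ) (hB : B.Nonempty) :
    ∑' x, pB γ B x = 1 := by
  rw [tsum_eq_sum (pB_vanish γ B), sum_suppP, pB_apply_00]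
  rw [Finset.sum_congr rfl (fun b hb => pB_apply_b3 γ B b hb)]
  rw [Finset.sum_const, nsmul_eq_mul]
  have hcard : (B.card : ℝ) ≠ 0 := by
    have := Finset.card_pos.mpr hB
    positivity
  field_simp
  ring

lemma pB_isPMF (γ : ℝ) (B : Finset ℕ) (h0 : 0 ≤ γ) (h1 : γ ≤ 1) (hB : B.Nonempty) :
    IsPMF (pB γ B) := ⟨pB_nonneg γ B h0 h1, pB_tsum γ B hB⟩

lemma d0_isPMF : IsPMF d0 := by
  constructor
  · intro x; unfold d0; split <;> norm_num
  · rw [tsum_eq_sum (s := {((0:ℕ), (0:ℕ))}) (by intro x hx; simp at hx; simp [d0, hx])]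
    simp [d0]

lemma dTV_self (p : ℕ × ℕ → ℝ) : dTV p p = 0 := by
  simp [dTV]

lemma dTV_d0_cBj (Nf : ℕ) (B : Finset ℕ) (j : ℕ) (hNf : 64 ≤ Nf) (hj : 2 ≤ j)
    (hB : B.Nonempty) : dTV d0 (cBj Nf B j) = 1 / (j : ℝ) := by
  have hvan : ∀ x ∉ suppC Nf B j, |d0 x - cBj Nf B j x| = 0 := by
    intro x hx
    have h1 : cBj Nf B j x = 0 := cBj_vanish Nf B j x hx
    have h2 : d0 x = 0 := by
      have : x ≠ (0, 0) := by
        intro h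
        apply hx
        rw [h]; simp [suppC, suppP]
      have h0 : x ≠ 0 := fun h => this (by rw [h]; rfl)
      simp [d0, h0, this]
    simp [h1, h2]
  unfold dTV
  rw [tsum_eq_sum hvan, sum_suppC]
  have hid : d0 (Encodable.encode (B, j), 4) = 0 := by simp [d0, Prod.ext_iff]
  have hb3 : ∀ b ∈ B, d0 (b, 3) = 0 := by
    intro b _; simp [d0, Prod.ext_iff]
  have h00 : d0 (0, 0) = 1 := by simp [d0]
  rw [cBj_apply_id, cBj_apply_00, hid, h00]
  have hstep : ∀ b ∈ B, |d0 (b, 3) - cBj Nf B j (b, 3)|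
      = (1 / (j : ℝ) - 1 / ((Nf : ℝ) * j)) / (B.card : ℝ) := by
    intro b hb
    rw [hb3 b hb, cBj_apply_b3 Nf B j b hb]
    rw [zero_sub, abs_neg, abs_of_nonneg]
    apply div_nonneg _ (by positivity)
    have := one_div_Nfj_le Nf j hNf (by omega)
    linarith
  rw [Finset.sum_congr rfl hstep, Finset.sum_const, nsmul_eq_mul]
  have hj' : (2 : ℝ) ≤ (j : ℝ) := by exact_mod_cast hj
  have h1 : |(0:ℝ) - 1 / ((Nf : ℝ) * j)| = 1 / ((Nf : ℝ) * j) := by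
    rw [zero_sub, abs_neg, abs_of_nonneg]; positivity
  have h2 : |1 - (1 - 1 / (j : ℝ))| = 1 / (j : ℝ) := by
    rw [show (1 : ℝ) - (1 - 1/(j:ℝ)) = 1/(j:ℝ) by ring, abs_of_nonneg]; positivity
  rw [h1, h2]
  have hcard : (B.card : ℝ) ≠ 0 := by
    have := Finset.card_pos.mpr hB
    positivity
  field_simp
  ring



section Learner

open Classical in
noncomputable def learner (Nf : ℕ) : (n : ℕ) → (Fin n → ℕ × ℕ) → (ℕ × ℕ → ℝ) := fun n S =>
  if h : ∃ z : Finset ℕ × ℕ, z.1.Nonempty ∧ 2 ≤ z.2 ∧ ∃ i, S i = (Encodable.encode z, 4)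
  then cBj Nf h.choose.1 h.choose.2 else d0


lemma learner_isLearner (Nf : ℕ) (hNf : 64 ≤ Nf) : IsLearner (learner Nf) := by
  intro n S
  unfold learner
  split
  · next h =>
      obtain ⟨h1, h2, _⟩ := h.choose_spec
      exact cBj_isPMF Nf _ _ hNf h2 h1
  · exact d0_isPMF

lemma cBj_row4 (Nf : ℕ) (B : Finset ℕ) (j : ℕ) (e : ℕ)
    (h : cBj Nf B j (e, 4) ≠ 0) : e = Encodable.encode (B, j) := by
  by_contra hne
  apply h
  show (if ((e:ℕ), (4:ℕ)) = (0, 0) then 1 - 1/(j:ℝ) else 0) +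
    (if ((e:ℕ),(4:ℕ)).1 ∈ B ∧ ((e:ℕ),(4:ℕ)).2 = 3 then (1 / (j : ℝ) - 1 / ((Nf : ℝ) * j)) / (B.card : ℝ) else 0) +
    (if ((e:ℕ),(4:ℕ)) = (Encodable.encode (B, j), 4) then 1 / ((Nf : ℝ) * j) else 0) = 0
  rw [if_neg (by simp [Prod.ext_iff]), if_neg (by simp), if_neg (fun hcontra => hne (Prod.ext_iff.mp hcontra).1)]
  ring

lemma learner_exact (Nf : ℕ) (B : Finset ℕ) (j : ℕ) (hB : B.Nonempty) (hj : 2 ≤ j)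
    (n : ℕ) (S : Fin n → ℕ × ℕ) (hsupp : ∀ i, cBj Nf B j (S i) ≠ 0)
    (hid : ∃ i, S i = (Encodable.encode (B, j), 4)) :
    learner Nf n S = cBj Nf B j := by
  unfold learner
  have hcond : ∃ z : Finset ℕ × ℕ, z.1.Nonempty ∧ 2 ≤ z.2 ∧
      ∃ i, S i = (Encodable.encode z, 4) := ⟨(B, j), hB, hj, hid⟩
  rw [dif_pos hcond]
  obtain ⟨_, _, i, hi⟩ := hcond.choose_spec
  have hne := hsupp i
  rw [hi] at hne
  have := cBj_row4 Nf B j _ hne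
  have hz : hcond.choose = (B, j) := Encodable.encode_injective this
  rw [hz]

lemma learner_close (Nf : ℕ) (B : Finset ℕ) (j : ℕ) (hNf : 64 ≤ Nf) (hB : B.Nonempty)
    (hj : 2 ≤ j) (n : ℕ) (S : Fin n → ℕ × ℕ) (hsupp : ∀ i, cBj Nf B j (S i) ≠ 0) :
    dTV (learner Nf n S) (cBj Nf B j) ≤ 1 / (j : ℝ) := by
  have hjpos : (0:ℝ) < (j:ℝ) := by exact_mod_cast (by omega : 0 < j)
  by_cases hc : ∃ z : Finset ℕ × ℕ, z.1.Nonempty ∧ 2 ≤ z.2 ∧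
      ∃ i, S i = (Encodable.encode z, 4)
  · obtain ⟨z, _, _, i, hi⟩ := hc
    have hne := hsupp i
    rw [hi] at hne
    have hzeq := cBj_row4 Nf B j _ hne
    have hid : ∃ i, S i = (Encodable.encode (B, j), 4) := ⟨i, by rw [hi, hzeq]⟩
    rw [learner_exact Nf B j hB hj n S hsupp hid, dTV_self]
    positivity
  · unfold learner
    rw [dif_neg hc, dTV_d0_cBj Nf B j hNf hj hB]

/-- The realizable-learnability sample bound. -/
noncomputable def nCr (Nf : ℕ) (ε δ : ℝ) : ℕ := Nf * (⌈1/ε⌉₊ + 1) * ⌈1/δ⌉₊ + 1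

theorem realizable_main (Nf : ℕ) (hNf : 64 ≤ Nf) (p : ℕ×ℕ → ℝ) (hp : p ∈ CC Nf)
    (ε : ℝ) (hε : ε ∈ Set.Ioo (0:ℝ) 1) (δ : ℝ) (hδ : δ ∈ Set.Ioo (0:ℝ) 1)
    (n : ℕ) (hn : nCr Nf ε δ ≤ n) :
    1 - δ ≤ iidProb p n {S | dTV (learner Nf n S) p ≤ ε} := by
  obtain ⟨B, j, hB, hj, rfl⟩ := hp
  obtain ⟨hε0, hε1⟩ := hε
  obtain ⟨hδ0, hδ1⟩ := hδ
  by_cases hcase : 1 / (j:ℝ) ≤ ε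
  · rw [iidProb_eq_one (cBj Nf B j) (suppC Nf B j) (cBj_vanish Nf B j)
      (cBj_isPMF Nf B j hNf hj hB) n _ ?_]
    · linarith
    · intro S hsupp
      exact le_trans (learner_close Nf B j hNf hB hj n S hsupp) hcase
  · push_neg at hcase
    have hjR : (0:ℝ) < (j:ℝ) := by exact_mod_cast (by omega : 0 < j)
    have hjlt : (j : ℝ) < 1 / ε := by
      rw [lt_div_iff₀ hε0]
      rw [lt_div_iff₀ hjR] at hcase
      nlinarith
    have hjle : j ≤ ⌈1/ε⌉₊ := by
      have h2 : (j:ℝ) < (⌈1/ε⌉₊ : ℝ) + 1 := lt_of_lt_of_le hjlt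
        (le_trans (Nat.le_ceil _) (by linarith))
      have : j < ⌈1/ε⌉₊ + 1 := by exact_mod_cast h2
      omega
    set θ : ℝ := 1 / ((Nf:ℝ) * j) with hθ
    have hj2 : (2:ℝ) ≤ (j:ℝ) := by exact_mod_cast hj
    have hNR : (1:ℝ) ≤ (Nf:ℝ)*j := by
      have h1 : (64:ℝ) ≤ (Nf:ℝ) := by exact_mod_cast hNf
      nlinarith
    have hθ0 : 0 < θ := by rw [hθ]; positivity
    have hθ1 : θ ≤ 1 := by
      rw [hθ]
      rw [div_le_one (by linarith)]
      exact hNR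
    have key := iidProb_exists_ge (cBj Nf B j) (suppC Nf B j) (cBj_vanish Nf B j)
        (cBj_isPMF Nf B j hNf hj hB) n (Encodable.encode (B, j), 4)
        {S | dTV (learner Nf n S) (cBj Nf B j) ≤ ε}
        (by
          intro S hsupp hid
          show dTV (learner Nf n S) (cBj Nf B j) ≤ ε
          rw [learner_exact Nf B j hB hj n S hsupp hid, dTV_self]
          linarith)
    rw [cBj_apply_id, ← hθ] at key
    refine le_trans ?_ key
    have hpow : (1-θ)^n ≤ δ := by
      have hnθ : 1/δ ≤ (n:ℝ) * θ := by
        have h1 : (1:ℝ)/δ ≤ (⌈1/δ⌉₊:ℝ) := Nat.le_ceil _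
        have h2 : Nf * j * ⌈1/δ⌉₊ ≤ n := by
          have : Nf * j * ⌈1/δ⌉₊ ≤ Nf * (⌈1/ε⌉₊ + 1) * ⌈1/δ⌉₊ := by
            apply Nat.mul_le_mul_right
            apply Nat.mul_le_mul_left
            omega
          unfold nCr at hn
          omega
        have h3 : ((Nf * j * ⌈1/δ⌉₊ : ℕ):ℝ) ≤ (n:ℝ) := by exact_mod_cast h2
        push_cast at h3
        have h4 : (n:ℝ) * θ = (n:ℝ) / ((Nf:ℝ)*j) := by rw [hθ]; ring
        rw [h4, le_div_iff₀ (by linarith)]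
        calc 1/δ * ((Nf:ℝ)*j) ≤ (⌈1/δ⌉₊:ℝ) * ((Nf:ℝ)*j) := by
              apply mul_le_mul_of_nonneg_right h1 (by linarith)
          _ ≤ (n:ℝ) := by nlinarith
      have bern : (1-θ)^n * (1 + (n:ℝ)*θ) ≤ 1 := by
        have h1 : 1 + (n:ℝ)*θ ≤ (1+θ)^n := one_add_mul_le_pow (by linarith) n
        have h2 : (0:ℝ) ≤ (1-θ)^n := pow_nonneg (by linarith) n
        calc (1-θ)^n * (1 + (n:ℝ)*θ) ≤ (1-θ)^n * (1+θ)^n :=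
              mul_le_mul_of_nonneg_left h1 h2
          _ = ((1-θ)*(1+θ))^n := by rw [mul_pow]
          _ = (1 - θ^2)^n := by ring_nf
          _ ≤ 1 := pow_le_one₀ (by nlinarith) (by nlinarith)
      have hpos : (0:ℝ) < 1 + (n:ℝ)*θ := by
        have : (0:ℝ) ≤ (n:ℝ)*θ := by positivity
        linarith
      have h5 : (1-θ)^n ≤ 1 / (1 + (n:ℝ)*θ) := by
        rw [le_div_iff₀ hpos]; exact bern
      have h6 : 1 / (1 + (n:ℝ)*θ) ≤ δ := by
        rw [div_le_iff₀ hpos]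
        have : 1/δ ≤ 1 + (n:ℝ)*θ := by linarith
        calc (1:ℝ) = δ * (1/δ) := by field_simp
          _ ≤ δ * (1 + (n:ℝ)*θ) := by
              apply mul_le_mul_of_nonneg_left this (le_of_lt hδ0)
      linarith
    linarith

end Learner

section Counting

lemma card_supersets (W V : Finset ℕ) (m : ℕ) (hVW : V ⊆ W) (hVm : V.card ≤ m) :
    ((W.powersetCard m).filter (fun B => V ⊆ B)).card
      = (W.card - V.card).choose (m - V.card) := by
  classical
  rw [← Finset.card_sdiff_of_subset hVW, ← Finset.card_powersetCard (m - V.card) (W \ V)]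
  apply Finset.card_bij' (fun B _ => B \ V) (fun D _ => D ∪ V)
  · intro B hB
    simp only [Finset.mem_filter, Finset.mem_powersetCard] at hB
    obtain ⟨⟨hBW, hBm⟩, hVB⟩ := hB
    rw [Finset.mem_powersetCard]
    constructor
    · exact Finset.sdiff_subset_sdiff hBW (le_refl _)
    · rw [Finset.card_sdiff_of_subset hVB, hBm]
  · intro D hD
    rw [Finset.mem_powersetCard] at hD
    obtain ⟨hDW, hDc⟩ := hD
    have hdisj : Disjoint D V := by
      apply Finset.disjoint_left.mpr
      intro a haD haV
      exact (Finset.mem_sdiff.mp (hDW haD)).2 haV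
    simp only [Finset.mem_filter, Finset.mem_powersetCard]
    refine ⟨⟨?_, ?_⟩, Finset.subset_union_right⟩
    · apply Finset.union_subset _ hVW
      exact hDW.trans (Finset.sdiff_subset)
    · rw [Finset.card_union_of_disjoint hdisj, hDc]
      omega
  · intro B hB
    simp only [Finset.mem_filter] at hB
    rw [Finset.sdiff_union_self_eq_union]
    exact Finset.union_eq_left.mpr hB.2
  · intro D hD
    rw [Finset.mem_powersetCard] at hD
    have hdisj : Disjoint D V := by
      apply Finset.disjoint_left.mpr
      intro a haD haV
      exact (Finset.mem_sdiff.mp (hD.1 haD)).2 haV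
    rw [Finset.union_sdiff_right, Finset.sdiff_eq_self_of_disjoint hdisj]

lemma counting (n K0 : ℕ) (W V G : Finset ℕ)
    (hVW : V ⊆ W) (hv : V.card ≤ n) (hG : G.card ≤ K0)
    (hW : W.card = 3 * K0 * (4*n+4) + (4*n+4) + n + 1) :
    3 * ((W.powersetCard (4*n+4)).filter
          (fun B => V ⊆ B ∧ 2*n+2 ≤ (B ∩ G).card)).card
      ≤ ((W.powersetCard (4*n+4)).filter (fun B => V ⊆ B)).card := by
  classical
  set m : ℕ := 4*n+4 with hm
  set T := (W.powersetCard m).filter (fun B => V ⊆ B) with hT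
  set bad := (W.powersetCard m).filter (fun B => V ⊆ B ∧ 2*n+2 ≤ (B ∩ G).card) with hbad
  set G' := G \ V with hG'
  -- step A
  have stepA : ∀ B ∈ bad, n+2 ≤ (B ∩ G').card := by
    intro B hB
    simp only [hbad, Finset.mem_filter] at hB
    obtain ⟨_, _, hcard⟩ := hB
    have hsub : B ∩ G ⊆ (B ∩ G') ∪ V := by
      intro x hx
      rw [Finset.mem_inter] at hx
      by_cases hxV : x ∈ V
      · exact Finset.mem_union_right _ hxV
      · exact Finset.mem_union_left _ (by
          rw [Finset.mem_inter, hG', Finset.mem_sdiff]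
          exact ⟨hx.1, hx.2, hxV⟩)
    have := (Finset.card_le_card hsub).trans (Finset.card_union_le _ _)
    omega
  -- step B
  have stepB : ∑ B ∈ T, (B ∩ G').card = ∑ b ∈ G', (T.filter (fun B => b ∈ B)).card := by
    have h1 : ∀ B : Finset ℕ, (B ∩ G').card = ∑ b ∈ G', (if b ∈ B then 1 else 0) := by
      intro B
      rw [Finset.inter_comm, ← Finset.filter_mem_eq_inter]
      rw [Finset.card_filter]
    calc ∑ B ∈ T, (B ∩ G').card = ∑ B ∈ T, ∑ b ∈ G', (if b ∈ B then 1 else 0) :=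
          Finset.sum_congr rfl (fun B _ => h1 B)
      _ = ∑ b ∈ G', ∑ B ∈ T, (if b ∈ B then 1 else 0) := Finset.sum_comm
      _ = ∑ b ∈ G', (T.filter (fun B => b ∈ B)).card := by
          apply Finset.sum_congr rfl
          intro b _
          rw [Finset.card_filter]
  -- step C
  have hTcard : T.card = (W.card - V.card).choose (m - V.card) := by
    rw [hT]; exact card_supersets W V m hVW (by omega)
  set c1 := (W.card - V.card - 1).choose (m - V.card - 1) with hc1
  have stepC : ∀ b ∈ G', (T.filter (fun B => b ∈ B)).card ≤ c1 := by
    intro b hb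
    by_cases hbW : b ∈ W
    · have hbV : b ∉ V := by
        rw [hG', Finset.mem_sdiff] at hb; exact hb.2
      have heq : T.filter (fun B => b ∈ B)
          = (W.powersetCard m).filter (fun B => insert b V ⊆ B) := by
        rw [hT, Finset.filter_filter]
        apply Finset.filter_congr
        intro B _
        constructor
        · rintro ⟨h1, h2⟩; exact Finset.insert_subset h2 h1
        · intro h
          exact ⟨(Finset.subset_insert b V).trans h, h (Finset.mem_insert_self b V)⟩
      rw [heq, card_supersets W (insert b V) m
        (Finset.insert_subset hbW hVW) (by rw [Finset.card_insert_of_notMem hbV]; omega)]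
      rw [Finset.card_insert_of_notMem hbV, hc1]
      have : W.card - (V.card + 1) = W.card - V.card - 1 := by omega
      rw [this]
      have : m - (V.card + 1) = m - V.card - 1 := by omega
      rw [this]
    · have : T.filter (fun B => b ∈ B) = ∅ := by
        apply Finset.filter_false_of_mem
        intro B hB
        rw [hT, Finset.mem_filter, Finset.mem_powersetCard] at hB
        exact fun hbB => hbW (hB.1.1 hbB)
      rw [this]
      simp
  -- step D
  have stepD : (n+2) * bad.card ≤ K0 * c1 := by
    have hbadT : bad ⊆ T := by
      intro B hB
      simp only [hbad, Finset.mem_filter] at hB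
      simp only [hT, Finset.mem_filter]
      exact ⟨hB.1, hB.2.1⟩
    calc (n+2) * bad.card = ∑ _B ∈ bad, (n+2) := by rw [Finset.sum_const, smul_eq_mul]; ring
      _ ≤ ∑ B ∈ bad, (B ∩ G').card := Finset.sum_le_sum stepA
      _ ≤ ∑ B ∈ T, (B ∩ G').card := Finset.sum_le_sum_of_subset hbadT
      _ = ∑ b ∈ G', (T.filter (fun B => b ∈ B)).card := stepB
      _ ≤ ∑ _b ∈ G', c1 := Finset.sum_le_sum stepC
      _ = G'.card * c1 := by rw [Finset.sum_const, smul_eq_mul]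
      _ ≤ K0 * c1 := by
          apply Nat.mul_le_mul_right
          exact le_trans (Finset.card_le_card (Finset.sdiff_subset)) hG
  -- step E
  set Mv := W.card - V.card with hMv
  set mv := m - V.card with hmv
  have hMv1 : 1 ≤ Mv := by omega
  have hmv1 : 1 ≤ mv := by omega
  have hident : Mv * c1 = T.card * mv := by
    rw [hTcard, hc1]
    have h1 : Mv = (Mv - 1) + 1 := by omega
    have h2 : mv = (mv - 1) + 1 := by omega
    calc Mv * c1 = ((Mv - 1) + 1) * (Mv - 1).choose (mv - 1) := by
          rw [← h1, hc1, hMv, hmv]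
      _ = ((Mv-1)+1).choose ((mv-1)+1) * ((mv-1)+1) := Nat.add_one_mul_choose_eq _ _
      _ = Mv.choose mv * mv := by rw [← h1, ← h2]
      _ = (W.card - V.card).choose (m - V.card) * mv := by rw [hMv, hmv]
  have stepE : 3 * (K0 * c1) ≤ (n+2) * T.card := by
    have hkey : 3 * K0 * mv ≤ (n+2) * Mv := by
      have : mv ≤ m := by omega
      have hMvbig : 12 * K0 * (n+1) + 1 ≤ Mv := by
        have : 3 * K0 * m = 12 * K0 * (n+1) := by rw [hm]; ring
        omega
      nlinarith
    have := Nat.mul_le_mul_left c1 hkey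
    -- c1 * (3 * K0 * mv) ≤ c1 * ((n+2) * Mv)
    have h3 : 3 * (K0 * c1) * mv ≤ (n+2) * T.card * mv := by
      calc 3 * (K0 * c1) * mv = c1 * (3 * K0 * mv) := by ring
        _ ≤ c1 * ((n+2) * Mv) := this
        _ = (n+2) * (Mv * c1) := by ring
        _ = (n+2) * (T.card * mv) := by rw [hident]
        _ = (n+2) * T.card * mv := by ring
    exact Nat.le_of_mul_le_mul_right h3 (by omega)
  -- combine
  have final : 3 * ((n+2) * bad.card) ≤ (n+2) * T.card := by
    calc 3 * ((n+2) * bad.card) ≤ 3 * (K0 * c1) := by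
          apply Nat.mul_le_mul_left
          exact stepD
      _ ≤ (n+2) * T.card := stepE
  have : (n+2) * (3 * bad.card) ≤ (n+2) * T.card := by
    calc (n+2) * (3 * bad.card) = 3 * ((n+2) * bad.card) := by ring
      _ ≤ (n+2) * T.card := final
  exact Nat.le_of_mul_le_mul_left this (by omega)

end Counting

section Adversary

lemma isPMF_summable {p : ℕ × ℕ → ℝ} (hp : IsPMF p) : Summable p := by
  by_contra h
  have h2 := hp.2
  rw [tsum_eq_zero_of_not_summable h] at h2
  norm_num at h2

lemma sum_abs_le_two_dTV (p q : ℕ × ℕ → ℝ) (hp : Summable p) (hq : Summable q)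
    (s : Finset (ℕ × ℕ)) : ∑ x ∈ s, |p x - q x| ≤ 2 * dTV p q := by
  unfold dTV
  have hsum : Summable (fun x => |p x - q x|) := summable_abs_iff.mpr (hp.sub hq)
  have h := Summable.sum_le_tsum s (fun x _ => abs_nonneg _) hsum
  linarith

lemma pB_summable (γ : ℝ) (B : Finset ℕ) : Summable (pB γ B) :=
  summable_of_ne_finset_zero (pB_vanish γ B)

lemma adversary (A : (n : ℕ) → (Fin n → ℕ × ℕ) → (ℕ × ℕ → ℝ)) (hA : IsLearner A)
    (n : ℕ) (γ r : ℝ) (hγ0 : 0 < γ) (hγ1 : γ ≤ 1/2) (hr0 : 0 ≤ r)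
    (hrγ : 32 * r ≤ 7 * γ) :
    ∃ B : Finset ℕ, B.Nonempty ∧
      iidProb (pB γ B) n {S | dTV (A n S) (pB γ B) ≤ r} ≤ 1/3 := by
  classical
  set m : ℕ := 4*n+4 with hm
  have hmpos : 0 < m := by omega
  have hmR : (0:ℝ) < (m:ℝ) := by exact_mod_cast hmpos
  set K0 : ℕ := ⌈8*(m:ℝ)/γ⌉₊ with hK0
  set M : ℕ := 3 * K0 * m + m + n + 1 with hM
  set W : Finset ℕ := Finset.range M with hW
  have hWcard : W.card = M := Finset.card_range M
  set F : Finset (Finset ℕ) := W.powersetCard m with hF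
  have hFne : F.Nonempty := by
    rw [hF, ← Finset.card_pos, Finset.card_powersetCard, hWcard]
    exact Nat.choose_pos (by omega)
  set bigS : Finset (ℕ × ℕ) := insert (0,0) (W.image (fun b => (b,3))) with hbigS
  have hmemF : ∀ B ∈ F, B ⊆ W ∧ B.card = m := by
    intro B hB
    rwa [hF, Finset.mem_powersetCard] at hB
  have hvanish : ∀ B ∈ F, ∀ x ∉ bigS, pB γ B x = 0 := by
    intro B hB x hx
    apply pB_vanish
    intro hmem
    apply hx
    simp only [suppP, Finset.mem_insert, Finset.mem_image] at hmem
    rcases hmem with h | ⟨b, hb, hbx⟩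
    · rw [hbigS, h]; exact Finset.mem_insert_self _ _
    · rw [hbigS]
      apply Finset.mem_insert_of_mem
      exact Finset.mem_image.mpr ⟨b, (hmemF B hB).1 hb, hbx⟩
  -- sum over bigS of pB is 1
  have hsum1 : ∀ B ∈ F, B.Nonempty → ∑ x ∈ bigS, pB γ B x = 1 := by
    intro B hB hBne
    rw [← (tsum_eq_sum (hvanish B hB) : ∑' x, pB γ B x = _)]
    exact pB_tsum γ B hBne
  have hNeB : ∀ B ∈ F, B.Nonempty := by
    intro B hB
    rw [← Finset.card_pos, (hmemF B hB).2]
    omega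
  -- the per-B probability as finite sum over piFinset bigS
  have hiid : ∀ B ∈ F, iidProb (pB γ B) n {S | dTV (A n S) (pB γ B) ≤ r}
      = ∑ S ∈ Fintype.piFinset (fun _ : Fin n => bigS),
          Set.indicator {S | dTV (A n S) (pB γ B) ≤ r}
            (fun T => ∏ i, pB γ B (T i)) S := by
    intro B hB
    exact iidProb_eq_sum (pB γ B) bigS (hvanish B hB) n _
  -- main bound
  have main : ∑ B ∈ F, iidProb (pB γ B) n {S | dTV (A n S) (pB γ B) ≤ r}
      ≤ (1/3 : ℝ) * F.card := by
    rw [Finset.sum_congr rfl hiid, Finset.sum_comm]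
    have perS : ∀ S ∈ Fintype.piFinset (fun _ : Fin n => bigS),
        ∑ B ∈ F, Set.indicator {S | dTV (A n S) (pB γ B) ≤ r}
            (fun T => ∏ i, pB γ B (T i)) S
        ≤ (1/3 : ℝ) * ∑ B ∈ F, ∏ i, pB γ B (S i) := by
      intro S hS
      have hSmem : ∀ i, S i ∈ bigS := by
        intro i
        exact Fintype.mem_piFinset.mp hS i
      have hSshape : ∀ i, S i = (0,0) ∨ ∃ w ∈ W, S i = (w,3) := by
        intro i
        have := hSmem i
        rw [hbigS, Finset.mem_insert] at this
        rcases this with h | h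
        · exact Or.inl h
        · right
          obtain ⟨w, hw, hwx⟩ := Finset.mem_image.mp h
          exact ⟨w, hw, hwx.symm⟩
      set V : Finset ℕ :=
        (Finset.univ.filter (fun i => S i ≠ (0,0))).image (fun i => (S i).1) with hV
      have hVcard : V.card ≤ n := by
        calc V.card ≤ (Finset.univ.filter (fun i => S i ≠ (0,0))).card :=
              Finset.card_image_le
          _ ≤ (Finset.univ : Finset (Fin n)).card := Finset.card_filter_le _ _
          _ = n := by simp
      have hVW : V ⊆ W := by
        intro b hb
        rw [hV] at hb
        obtain ⟨i, hi, hib⟩ := Finset.mem_image.mp hb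
        rw [Finset.mem_filter] at hi
        rcases hSshape i with h | ⟨w, hw, hwx⟩
        · exact absurd h hi.2
        · rw [← hib, hwx]; exact hw
      set f := A n S with hf
      have hfPMF : IsPMF f := hA n S
      set GS : Finset ℕ := W.filter (fun b => γ/(8*(m:ℝ)) ≤ f (b,3)) with hGS
      -- GS is small
      have hGScard : GS.card ≤ K0 := by
        have h1 : ∑ b ∈ GS, f (b,3) ≤ 1 := by
          have heq : ∑ b ∈ GS, f (b,3) = ∑ x ∈ GS.image (fun b => (b,3)), f x := by
            rw [Finset.sum_image]
            intro a _ b _ h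
            exact (Prod.ext_iff.mp h).1
          rw [heq, ← hfPMF.2]
          exact Summable.sum_le_tsum _ (fun x _ => hfPMF.1 x) (isPMF_summable hfPMF)
        have h2 : (GS.card : ℝ) * (γ/(8*(m:ℝ))) ≤ ∑ b ∈ GS, f (b,3) := by
          calc (GS.card : ℝ) * (γ/(8*(m:ℝ))) = ∑ _b ∈ GS, (γ/(8*(m:ℝ))) := by
                rw [Finset.sum_const, nsmul_eq_mul]
            _ ≤ ∑ b ∈ GS, f (b,3) := Finset.sum_le_sum (fun b hb =>
                (Finset.mem_filter.mp hb).2)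
        have h3 : (GS.card : ℝ) ≤ 8*(m:ℝ)/γ := by
          have hpos : (0:ℝ) < γ/(8*(m:ℝ)) := by positivity
          have := le_trans h2 h1
          rw [← le_div_iff₀ hpos] at this
          calc (GS.card : ℝ) ≤ 1 / (γ/(8*(m:ℝ))) := this
            _ = 8*(m:ℝ)/γ := by field_simp
        have h4 : (GS.card : ℝ) ≤ (K0 : ℝ) := le_trans h3 (Nat.le_ceil _)
        exact_mod_cast h4
      -- success forces large intersection with GS
      have hsucc : ∀ B ∈ F, dTV (A n S) (pB γ B) ≤ r → 2*n+2 ≤ (B ∩ GS).card := by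
        intro B hB hdtv
        obtain ⟨hBW, hBcard⟩ := hmemF B hB
        set D : Finset ℕ := B \ GS with hD
        have hDbound : ∀ b ∈ D, 7*γ/(8*(m:ℝ)) ≤ |f (b,3) - pB γ B (b,3)| := by
          intro b hb
          rw [hD, Finset.mem_sdiff] at hb
          obtain ⟨hbB, hbGS⟩ := hb
          have hfb : f (b,3) < γ/(8*(m:ℝ)) := by
            by_contra hcon
            push_neg at hcon
            exact hbGS (Finset.mem_filter.mpr ⟨hBW hbB, hcon⟩)
          have hpBb : pB γ B (b,3) = γ/(m:ℝ) := by
            rw [pB_apply_b3 γ B b hbB, hBcard]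
          have h8 : γ/(8*(m:ℝ)) ≤ γ/(m:ℝ) := by
            rw [div_le_div_iff₀ (by positivity) hmR]
            nlinarith
          have hf0 : (0:ℝ) ≤ f (b,3) := hfPMF.1 _
          rw [hpBb, abs_sub_comm, abs_of_nonneg (by linarith)]
          calc 7*γ/(8*(m:ℝ)) = γ/(m:ℝ) - γ/(8*(m:ℝ)) := by field_simp; ring
            _ ≤ γ/(m:ℝ) - f (b,3) := by linarith
        have hDsum : (D.card : ℝ) * (7*γ/(8*(m:ℝ))) ≤ 2*r := by
          have h1 : ∑ b ∈ D, |f (b,3) - pB γ B (b,3)| ≤ 2 * dTV f (pB γ B) := by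
            have heq : ∑ b ∈ D, |f (b,3) - pB γ B (b,3)|
                = ∑ x ∈ D.image (fun b => (b,3)), |f x - pB γ B x| := by
              rw [Finset.sum_image]
              intro a _ b _ h
              exact (Prod.ext_iff.mp h).1
            rw [heq]
            exact sum_abs_le_two_dTV f (pB γ B) (isPMF_summable hfPMF)
              (pB_summable γ B) _
          have h2 : (D.card : ℝ) * (7*γ/(8*(m:ℝ))) ≤ ∑ b ∈ D, |f (b,3) - pB γ B (b,3)| := by
            calc (D.card : ℝ) * (7*γ/(8*(m:ℝ))) = ∑ _b ∈ D, 7*γ/(8*(m:ℝ)) := by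
                  rw [Finset.sum_const, nsmul_eq_mul]
              _ ≤ ∑ b ∈ D, |f (b,3) - pB γ B (b,3)| := Finset.sum_le_sum hDbound
          have h3 : dTV f (pB γ B) ≤ r := hdtv
          linarith
        have hDhalf : (D.card : ℝ) ≤ (m:ℝ)/2 := by
          have hpos : (0:ℝ) < 7*γ/(8*(m:ℝ)) := by positivity
          rw [← le_div_iff₀ hpos] at hDsum
          calc (D.card : ℝ) ≤ 2*r / (7*γ/(8*(m:ℝ))) := hDsum
            _ = 16*r*(m:ℝ)/(7*γ) := by field_simp; ring
            _ ≤ (m:ℝ)/2 := by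
                rw [div_le_div_iff₀ (by positivity) (by norm_num : (0:ℝ) < 2)]
                nlinarith
        have hDnat : D.card ≤ 2*n+2 := by
          have hm4 : (m:ℝ) = 4*(n:ℝ)+4 := by rw [hm]; push_cast; ring
          have : (D.card : ℝ) ≤ ((2*n+2 : ℕ) : ℝ) := by push_cast; linarith
          exact_mod_cast this
        have := Finset.card_sdiff_add_card_inter B GS
        rw [hBcard, ← hD] at this
        omega
      -- pointwise comparison of products
      set T : Finset (Finset ℕ) := F.filter (fun B => V ⊆ B) with hT
      set bad : Finset (Finset ℕ) := F.filter
        (fun B => V ⊆ B ∧ 2*n+2 ≤ (B ∩ GS).card) with hbad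
      have hprod0 : ∀ B ∈ F, ¬(V ⊆ B) → ∏ i, pB γ B (S i) = 0 := by
        intro B hB hVB
        obtain ⟨b, hbV, hbB⟩ := Finset.not_subset.mp hVB
        rw [hV] at hbV
        obtain ⟨i, hi, hib⟩ := Finset.mem_image.mp hbV
        rw [Finset.mem_filter] at hi
        apply Finset.prod_eq_zero (Finset.mem_univ i)
        rcases hSshape i with h | ⟨w, _, hwx⟩
        · exact absurd h hi.2
        · rw [hwx]
          have hwb : w = b := by rw [hwx] at hib; exact hib
        
          rw [hwb]
          show (if ((b:ℕ),(3:ℕ)) = (0,0) then 1 - γ else 0) +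
            (if ((b:ℕ),(3:ℕ)).1 ∈ B ∧ ((b:ℕ),(3:ℕ)).2 = 3 then γ / (B.card : ℝ) else 0) = 0
          rw [if_neg (by simp [Prod.ext_iff]), if_neg (by
            rintro ⟨hmem, _⟩
            exact hbB hmem)]
          ring
      have hprodeq : ∀ B ∈ F, ∀ B' ∈ F, V ⊆ B → V ⊆ B' →
          ∏ i, pB γ B (S i) = ∏ i, pB γ B' (S i) := by
        intro B hB B' hB' hVB hVB'
        apply Finset.prod_congr rfl
        intro i _
        rcases hSshape i with h | ⟨w, _, hwx⟩
        · rw [h, pB_apply_00, pB_apply_00]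
        · have hwV : (S i ≠ (0,0)) → w ∈ V := by
            intro hne
            rw [hV]
            apply Finset.mem_image.mpr
            exact ⟨i, Finset.mem_filter.mpr ⟨Finset.mem_univ i, hne⟩, by rw [hwx]⟩
          by_cases hne : S i = (0,0)
          · rw [hne, pB_apply_00, pB_apply_00]
          · have hwVmem := hwV hne
            rw [hwx, pB_apply_b3 γ B w (hVB hwVmem), pB_apply_b3 γ B' w (hVB' hwVmem),
              (hmemF B hB).2, (hmemF B' hB').2]
      have hprodnn : ∀ B, (0:ℝ) ≤ ∏ i, pB γ B (S i) := by
        intro B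
        exact Finset.prod_nonneg fun i _ => pB_nonneg γ B (le_of_lt hγ0) (by linarith) _
      -- indicator bound: LHS ≤ sum over bad
      have hLHS : ∑ B ∈ F, Set.indicator {S | dTV (A n S) (pB γ B) ≤ r}
            (fun T => ∏ i, pB γ B (T i)) S
          ≤ ∑ B ∈ bad, ∏ i, pB γ B (S i) := by
        rw [← Finset.sum_filter_add_sum_filter_not F
          (fun B => V ⊆ B ∧ 2*n+2 ≤ (B ∩ GS).card)
          (fun B => Set.indicator {S | dTV (A n S) (pB γ B) ≤ r}
            (fun T => ∏ i, pB γ B (T i)) S)]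
        have h1 : ∀ B ∈ bad, Set.indicator {S | dTV (A n S) (pB γ B) ≤ r}
            (fun T => ∏ i, pB γ B (T i)) S ≤ ∏ i, pB γ B (S i) := by
          intro B _
          by_cases hmem : S ∈ {S | dTV (A n S) (pB γ B) ≤ r}
          · rw [Set.indicator_of_mem hmem]
          · rw [Set.indicator_of_notMem hmem]
            exact hprodnn B
        have h2 : ∀ B ∈ F.filter (fun B => ¬(V ⊆ B ∧ 2*n+2 ≤ (B ∩ GS).card)),
            Set.indicator {S | dTV (A n S) (pB γ B) ≤ r}
              (fun T => ∏ i, pB γ B (T i)) S = 0 := by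
          intro B hB
          rw [Finset.mem_filter] at hB
          obtain ⟨hBF, hnotbad⟩ := hB
          by_cases hmem : S ∈ {S | dTV (A n S) (pB γ B) ≤ r}
          · rw [Set.indicator_of_mem hmem]
            by_cases hVB : V ⊆ B
            · exact absurd ⟨hVB, hsucc B hBF hmem⟩ hnotbad
            · exact hprod0 B hBF hVB
          · exact Set.indicator_of_notMem hmem _
        rw [Finset.sum_congr rfl h2, Finset.sum_const, smul_zero, add_zero]
        exact Finset.sum_le_sum h1
      -- bad sum ≤ (1/3) T sum via counting
      have hcount : 3 * bad.card ≤ T.card := by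
        have hWc : W.card = 3 * K0 * (4*n+4) + (4*n+4) + n + 1 := by
          rw [hWcard, hM, hm]
        have := counting n K0 W V GS hVW hVcard hGScard hWc
        -- reconcile filters
        have e1 : bad.card = ((W.powersetCard (4*n+4)).filter
            (fun B => V ⊆ B ∧ 2*n+2 ≤ (B ∩ GS).card)).card := by
          rw [hbad, hF, hm]
        have e2 : T.card = ((W.powersetCard (4*n+4)).filter (fun B => V ⊆ B)).card := by
          rw [hT, hF, hm]
        rw [e1, e2]
        exact this
      have hbadT : bad ⊆ T := by
        intro B hB
        rw [hbad, Finset.mem_filter] at hB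
        rw [hT, Finset.mem_filter]
        exact ⟨hB.1, hB.2.1⟩
      have hRHS : ∑ B ∈ bad, ∏ i, pB γ B (S i)
          ≤ (1/3 : ℝ) * ∑ B ∈ F, ∏ i, pB γ B (S i) := by
        by_cases hTne : T.Nonempty
        · obtain ⟨B0, hB0⟩ := hTne
          rw [hT, Finset.mem_filter] at hB0
          obtain ⟨hB0F, hB0V⟩ := hB0
          set w : ℝ := ∏ i, pB γ B0 (S i) with hw
          have hwnn : 0 ≤ w := hprodnn B0
          have hmemT : ∀ B ∈ T, B ∈ F ∧ V ⊆ B := by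
            intro B hB
            rw [hT, Finset.mem_filter] at hB
            exact hB
          have hbadsum : ∑ B ∈ bad, ∏ i, pB γ B (S i) = bad.card * w := by
            rw [Finset.sum_congr rfl (fun B hB => by
              obtain ⟨hBF, hBV⟩ := hmemT B (hbadT hB)
              exact hprodeq B hBF B0 hB0F hBV hB0V)]
            rw [Finset.sum_const, nsmul_eq_mul]
          have hTsum : ∑ B ∈ T, ∏ i, pB γ B (S i) = T.card * w := by
            rw [Finset.sum_congr rfl (fun B hB => by
              obtain ⟨hBF, hBV⟩ := hmemT B hB
              exact hprodeq B hBF B0 hB0F hBV hB0V)]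
            rw [Finset.sum_const, nsmul_eq_mul]
          have hTF : ∑ B ∈ T, ∏ i, pB γ B (S i) ≤ ∑ B ∈ F, ∏ i, pB γ B (S i) := by
            apply Finset.sum_le_sum_of_subset_of_nonneg (Finset.filter_subset _ _)
            intro B _ _
            exact hprodnn B
          have hcast : (3 : ℝ) * bad.card ≤ T.card := by exact_mod_cast hcount
          calc ∑ B ∈ bad, ∏ i, pB γ B (S i) = bad.card * w := hbadsum
            _ ≤ (1/3 : ℝ) * (T.card * w) := by nlinarith
            _ = (1/3 : ℝ) * ∑ B ∈ T, ∏ i, pB γ B (S i) := by rw [hTsum]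
            _ ≤ (1/3 : ℝ) * ∑ B ∈ F, ∏ i, pB γ B (S i) := by linarith
        · have : bad = ∅ := Finset.eq_empty_of_forall_notMem (fun B hB =>
            hTne ⟨B, hbadT hB⟩)
          rw [this, Finset.sum_empty]
          have : (0:ℝ) ≤ ∑ B ∈ F, ∏ i, pB γ B (S i) :=
            Finset.sum_nonneg fun B _ => hprodnn B
          linarith
      exact le_trans hLHS hRHS
    calc ∑ S ∈ Fintype.piFinset (fun _ : Fin n => bigS),
          ∑ B ∈ F, Set.indicator {S | dTV (A n S) (pB γ B) ≤ r}
            (fun T => ∏ i, pB γ B (T i)) S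
        ≤ ∑ S ∈ Fintype.piFinset (fun _ : Fin n => bigS),
            (1/3 : ℝ) * ∑ B ∈ F, ∏ i, pB γ B (S i) := Finset.sum_le_sum perS
      _ = (1/3 : ℝ) * ∑ B ∈ F, ∑ S ∈ Fintype.piFinset (fun _ : Fin n => bigS),
            ∏ i, pB γ B (S i) := by
          rw [← Finset.mul_sum, Finset.sum_comm]
      _ = (1/3 : ℝ) * ∑ B ∈ F, (1:ℝ) := by
          congr 1
          apply Finset.sum_congr rfl
          intro B hB
          rw [sum_prod_pi bigS n (pB γ B), hsum1 B hB (hNeB B hB), one_pow]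
      _ = (1/3 : ℝ) * F.card := by rw [Finset.sum_const, nsmul_eq_mul, mul_one]
  -- extract a single B
  have hexists : ∃ B ∈ F, iidProb (pB γ B) n {S | dTV (A n S) (pB γ B) ≤ r} ≤ 1/3 := by
    apply Finset.exists_le_of_sum_le hFne
    rw [Finset.sum_const, nsmul_eq_mul]
    calc ∑ B ∈ F, iidProb (pB γ B) n {S | dTV (A n S) (pB γ B) ≤ r}
        ≤ (1/3 : ℝ) * F.card := main
      _ = F.card * (1/3 : ℝ) := by ring
  obtain ⟨B, hBF, hBle⟩ := hexists
  exact ⟨B, hNeB B hBF, hBle⟩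

end Adversary

section Assembly

lemma cBj_summable (Nf : ℕ) (B : Finset ℕ) (j : ℕ) : Summable (cBj Nf B j) :=
  summable_of_ne_finset_zero (cBj_vanish Nf B j)

lemma pointwise_le (Nf : ℕ) (B : Finset ℕ) (j : ℕ) (η γ : ℝ)
    (hB : B.Nonempty) (hNf : 64 ≤ Nf) (hj : 2 ≤ j)
    (h00 : (1-η)*(1-γ) ≤ 1 - 1/(j:ℝ))
    (hb3 : (1-η)*γ ≤ 1/(j:ℝ) - 1/((Nf:ℝ)*j)) :
    ∀ x, (1-η) * pB γ B x ≤ cBj Nf B j x := by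
  intro x
  by_cases h0 : x = (0,0)
  · rw [h0, pB_apply_00, cBj_apply_00]
    exact h00
  · by_cases h3 : x.1 ∈ B ∧ x.2 = 3
    · have hx : x = (x.1, 3) := by rw [← h3.2]
      rw [hx, pB_apply_b3 _ _ _ h3.1, cBj_apply_b3 _ _ _ _ h3.1]
      have hcard : (0:ℝ) < (B.card : ℝ) := by
        have := Finset.card_pos.mpr hB
        exact_mod_cast this
      rw [mul_div_assoc']
      exact div_le_div_of_nonneg_right hb3 hcard.le
    · have hzero : pB γ B x = 0 := by
        show (if x = (0,0) then 1 - γ else 0) +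
          (if x.1 ∈ B ∧ x.2 = 3 then γ / (B.card : ℝ) else 0) = 0
        rw [if_neg h0, if_neg h3]; ring
      rw [hzero, mul_zero]
      exact cBj_nonneg Nf B j hNf hj x

/-- Admissibility in the case `η < 1`. -/
lemma admissible_lt (Nf : ℕ) (B : Finset ℕ) (j : ℕ) (η γ : ℝ)
    (hB : B.Nonempty) (hNf : 64 ≤ Nf) (hj : 2 ≤ j) (hη0 : 0 < η) (hη1 : η < 1)
    (hγ0 : 0 ≤ γ) (hγ1 : γ ≤ 1)
    (h00 : (1-η)*(1-γ) ≤ 1 - 1/(j:ℝ))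
    (hb3 : (1-η)*γ ≤ 1/(j:ℝ) - 1/((Nf:ℝ)*j)) :
    ∃ q : ℕ×ℕ → ℝ, IsPMF q ∧
      (fun x => η * q x + (1 - η) * pB γ B x) = cBj Nf B j := by
  refine ⟨fun x => (cBj Nf B j x - (1-η) * pB γ B x) / η, ⟨?_, ?_⟩, ?_⟩
  · intro x
    have := pointwise_le Nf B j η γ hB hNf hj h00 hb3 x
    have h2 : 0 ≤ cBj Nf B j x - (1-η) * pB γ B x := by linarith
    positivity
  · have hs1 : Summable (cBj Nf B j) := cBj_summable Nf B j
    have hs2 : Summable (fun x => (1-η) * pB γ B x) := (pB_summable γ B).mul_left _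
    have heq : (fun x => (cBj Nf B j x - (1-η) * pB γ B x) / η)
        = fun x => (1/η) * (cBj Nf B j x - (1-η) * pB γ B x) := by
      funext x; field_simp
    rw [heq, tsum_mul_left, hs1.tsum_sub hs2, tsum_mul_left,
      cBj_tsum Nf B j hB, pB_tsum γ B hB]
    field_simp
    ring
  · funext x
    field_simp
    ring

/-- Admissibility in the case `1 ≤ η`. -/
lemma admissible_ge (Nf : ℕ) (B : Finset ℕ) (j : ℕ) (η γ : ℝ)
    (hB : B.Nonempty) (hNf : 64 ≤ Nf) (hj : 2 ≤ j) (hη1 : 1 ≤ η)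
    (hγ0 : 0 ≤ γ) (hγ1 : γ ≤ 1) :
    ∃ q : ℕ×ℕ → ℝ, IsPMF q ∧
      (fun x => η * q x + (1 - η) * pB γ B x) = cBj Nf B j := by
  have hη0 : 0 < η := by linarith
  refine ⟨fun x => (cBj Nf B j x + (η-1) * pB γ B x) / η, ⟨?_, ?_⟩, ?_⟩
  · intro x
    have h1 := cBj_nonneg Nf B j hNf hj x
    have h2 := pB_nonneg γ B hγ0 hγ1 x
    have h3 : 0 ≤ (η-1) * pB γ B x := mul_nonneg (by linarith) h2
    positivity
  · have hs1 : Summable (cBj Nf B j) := cBj_summable Nf B j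
    have hs2 : Summable (fun x => (η-1) * pB γ B x) := (pB_summable γ B).mul_left _
    have heq : (fun x => (cBj Nf B j x + (η-1) * pB γ B x) / η)
        = fun x => (1/η) * (cBj Nf B j x + (η-1) * pB γ B x) := by
      funext x; field_simp
    rw [heq, tsum_mul_left, hs1.tsum_add hs2, tsum_mul_left,
      cBj_tsum Nf B j hB, pB_tsum γ B hB]
    field_simp
    ring
  · funext x
    field_simp
    ring

end Assembly


set_option maxHeartbeats 1000000 in
/-- for every `α > 0` there is a class over `ℕ × ℕ` that is
realizably learnable but not `η`-subtractive `α`-robustly learnable for any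
`0 < η ≤ 1/(16α)`. -/
theorem exists_realizable_not_eta_subtractive (α : ℝ) (hα : 0 < α) :
    ∃ C : Set (ℕ × ℕ → ℝ), (∀ p ∈ C, IsPMF p) ∧ RealizablyLearnable C ∧
      ∀ η : ℝ, 0 < η → η ≤ 1 / (16 * α) →
        ¬ EtaSubtractiveRobustlyLearnable C η α := by
  classical
  set Nf : ℕ := 64 + ⌈32*α⌉₊ with hNfdef
  have hNf64 : 64 ≤ Nf := by omega
  have hNfα : 32*α ≤ (Nf:ℝ) := by
    have h := Nat.le_ceil (32*α)
    have h2 : ((⌈32*α⌉₊ : ℕ):ℝ) ≤ (Nf:ℝ) := by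
      exact_mod_cast Nat.le_add_left _ _
    linarith
  have hNfR : (64:ℝ) ≤ (Nf:ℝ) := by exact_mod_cast hNf64
  refine ⟨CC Nf, ?_, ?_, ?_⟩
  · rintro p ⟨B, j, hB, hj, rfl⟩
    exact cBj_isPMF Nf B j hNf64 hj hB
  · exact ⟨learner Nf, learner_isLearner Nf hNf64, nCr Nf,
      fun p hp ε hε δ hδ n hn => realizable_main Nf hNf64 p hp ε hε δ hδ n hn⟩
  · intro η hη0 hη16 hcon
    obtain ⟨A, hA, nC, H⟩ := hcon
    have hαη : α*η ≤ 1/16 := by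
      rw [le_div_iff₀ (by positivity : (0:ℝ) < 16*α)] at hη16
      nlinarith
    have hαη0 : 0 < α*η := by positivity
    set ε : ℝ := α*η/2 with hεdef
    have hε : ε ∈ Set.Ioo (0:ℝ) 1 := ⟨by positivity, by rw [hεdef]; linarith⟩
    have hδv : (1/2 : ℝ) ∈ Set.Ioo (0:ℝ) 1 := by norm_num
    set n := nC ε (1/2) with hn
    set r : ℝ := α*η + ε with hrdef
    have hr0 : 0 ≤ r := by rw [hrdef, hεdef]; positivity
    by_cases hcase : η < 1
    · -- η < 1
      set j : ℕ := ⌊1/(16*(α*η))⌋₊ + 1 with hjdef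
      have hx1 : (1:ℝ) ≤ 1/(16*(α*η)) := by
        rw [le_div_iff₀ (by positivity)]
        linarith
      have hj2 : 2 ≤ j := by
        have : 1 ≤ ⌊1/(16*(α*η))⌋₊ := Nat.le_floor (by exact_mod_cast hx1)
        omega
      have hjlbR : 1/(16*(α*η)) ≤ (j:ℝ) := by
        have h := Nat.lt_floor_add_one (1/(16*(α*η)))
        have : ((⌊1/(16*(α*η))⌋₊ + 1 : ℕ) : ℝ) = (⌊1/(16*(α*η))⌋₊ : ℝ) + 1 := by
          push_cast; ring
        rw [hjdef, this]
        linarith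
      have hjubR : (j:ℝ) ≤ 1/(8*(α*η)) := by
        have h1 : (⌊1/(16*(α*η))⌋₊ : ℝ) ≤ 1/(16*(α*η)) := Nat.floor_le (by positivity)
        have h2 : 1/(8*(α*η)) = 2 * (1/(16*(α*η))) := by
          field_simp
          ring
        have h3 : ((⌊1/(16*(α*η))⌋₊ + 1 : ℕ) : ℝ) = (⌊1/(16*(α*η))⌋₊ : ℝ) + 1 := by
          push_cast; ring
        rw [hjdef, h3, h2]
        linarith
      have hjR : (2:ℝ) ≤ (j:ℝ) := by exact_mod_cast hj2
      have hjpos : (0:ℝ) < (j:ℝ) := by linarith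
      have hNfpos : (0:ℝ) < (Nf:ℝ) := by linarith
      have hNfj : (0:ℝ) < (Nf:ℝ)*(j:ℝ) := by positivity
      have h1η : (0:ℝ) < 1 - η := by linarith
      set F : ℝ := (1/(j:ℝ) - 1/((Nf:ℝ)*j))/(1-η) with hFdef
      have hstep : 1/((Nf:ℝ)*j) ≤ (1/64) * (1/(j:ℝ)) := by
        have h64 : (64:ℝ)*(j:ℝ) ≤ (Nf:ℝ)*(j:ℝ) := by nlinarith
        have h1 : 1/((Nf:ℝ)*j) ≤ 1/((64:ℝ)*(j:ℝ)) :=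
          one_div_le_one_div_of_le (by positivity) h64
        have h2 : 1/((64:ℝ)*(j:ℝ)) = (1/64) * (1/(j:ℝ)) := by
          field_simp
        linarith
      have hddiff : (63/64) * (1/(j:ℝ)) ≤ 1/(j:ℝ) - 1/((Nf:ℝ)*j) := by
        have : (0:ℝ) < 1/(j:ℝ) := by positivity
        linarith
      have hdpos : (0:ℝ) < 1/(j:ℝ) - 1/((Nf:ℝ)*j) := by
        have h1 : (0:ℝ) < (63/64) * (1/(j:ℝ)) := by positivity
        linarith
      have hF0 : 0 < F := by rw [hFdef]; positivity
      set γ : ℝ := min (1/2) F with hγdef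
      have hγ0 : 0 < γ := lt_min (by norm_num) hF0
      have hγhalf : γ ≤ 1/2 := min_le_left _ _
      have hγF : γ ≤ F := min_le_right _ _
      have hFval : (1-η)*F = 1/(j:ℝ) - 1/((Nf:ℝ)*j) := by
        rw [hFdef, mul_comm, div_mul_cancel₀ _ h1η.ne']
      have hb3 : (1-η)*γ ≤ 1/(j:ℝ) - 1/((Nf:ℝ)*j) := by
        have h1 : (1-η)*γ ≤ (1-η)*F := by nlinarith
        linarith [hFval]
      have hNfj1η : 1/((Nf:ℝ)*j) ≤ η := by
        rw [div_le_iff₀ hNfj]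
        have ha : 1 ≤ (j:ℝ) * (16*(α*η)) := by
          rw [div_le_iff₀ (by positivity)] at hjlbR
          exact hjlbR
        have hb : (32*α) * (η*(j:ℝ)) ≤ (Nf:ℝ) * (η*(j:ℝ)) :=
          mul_le_mul_of_nonneg_right hNfα (by positivity)
        nlinarith
      have h00 : (1-η)*(1-γ) ≤ 1 - 1/(j:ℝ) := by
        rcases min_cases (1/2 : ℝ) F with ⟨hmin, _⟩ | ⟨hmin, _⟩
        · have hγeq : γ = 1/2 := by rw [hγdef, hmin]
          have hjhalf : 1/(j:ℝ) ≤ 1/2 := by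
            rw [div_le_div_iff₀ hjpos (by norm_num)]
            linarith
          rw [hγeq]
          nlinarith
        · have hγeq : γ = F := by rw [hγdef, hmin]
          have hprod : (1-η)*γ = 1/(j:ℝ) - 1/((Nf:ℝ)*j) := by
            rw [hγeq]; exact hFval
          have hexp : (1-η)*(1-γ) = (1-η) - (1-η)*γ := by ring
          rw [hexp, hprod]
          linarith
      have hrγ : 32*r ≤ 7*γ := by
        rcases min_cases (1/2:ℝ) F with ⟨hmin, _⟩ | ⟨hmin, _⟩
        · have hγeq : γ = 1/2 := by rw [hγdef, hmin]
          rw [hγeq, hrdef, hεdef]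
          linarith
        · have hγeq : γ = F := by rw [hγdef, hmin]
          have h1 : (63/64)*(1/(j:ℝ)) ≤ F := by
            rw [hFdef]
            have h2 : 1/(j:ℝ) - 1/((Nf:ℝ)*j) ≤ (1/(j:ℝ) - 1/((Nf:ℝ)*j))/(1-η) := by
              rw [le_div_iff₀ h1η]
              nlinarith
            linarith
          have h2 : 8*(α*η) ≤ 1/(j:ℝ) := by
            rw [le_div_iff₀ hjpos]
            have h3 : 8*(α*η) * (j:ℝ) ≤ 8*(α*η) * (1/(8*(α*η))) := by
              apply mul_le_mul_of_nonneg_left hjubR (by positivity)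
            have h4 : 8*(α*η) * (1/(8*(α*η))) = 1 := by field_simp
            linarith
          rw [hγeq, hrdef, hεdef]
          nlinarith
      obtain ⟨B, hBne, hBle⟩ := adversary A hA n γ r hγ0 hγhalf hr0 hrγ
      have hpmf : IsPMF (pB γ B) :=
        pB_isPMF γ B (le_of_lt hγ0) (by linarith) hBne
      obtain ⟨q, hq, hmix⟩ := admissible_lt Nf B j η γ hBne hNf64 hj2 hη0 hcase
        (le_of_lt hγ0) (by linarith) h00 hb3
      have hmem : mix η q (pB γ B) ∈ CC Nf := by
        have : mix η q (pB γ B) = cBj Nf B j := hmix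
        rw [this]
        exact ⟨B, j, hBne, hj2, rfl⟩
      have hmain := H (pB γ B) hpmf ⟨q, hq, hmem⟩ ε hε (1/2) hδv n hn.ge
      rw [hrdef] at hBle
      have : (1:ℝ) - 1/2 ≤ 1/3 := le_trans hmain hBle
      linarith
    · -- 1 ≤ η
      push_neg at hcase
      have hrγ : 32*r ≤ 7*(1/2 : ℝ) := by
        rw [hrdef, hεdef]
        linarith
      obtain ⟨B, hBne, hBle⟩ := adversary A hA n (1/2) r (by norm_num) (le_refl _) hr0 hrγ
      have hpmf : IsPMF (pB (1/2) B) :=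
        pB_isPMF (1/2) B (by norm_num) (by norm_num) hBne
      obtain ⟨q, hq, hmix⟩ := admissible_ge Nf B 2 η (1/2) hBne hNf64 (le_refl 2) hcase
        (by norm_num) (by norm_num)
      have hmem : mix η q (pB (1/2) B) ∈ CC Nf := by
        have : mix η q (pB (1/2) B) = cBj Nf B 2 := hmix
        rw [this]
        exact ⟨B, 2, hBne, le_refl 2, rfl⟩
      have hmain := H (pB (1/2) B) hpmf ⟨q, hq, hmem⟩ ε hε (1/2) hδv n hn.ge
      rw [hrdef] at hBle
      have : (1:ℝ) - 1/2 ≤ 1/3 := le_trans hmain hBle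
      linarith

end RobustDistLearn
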